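/- Knight-type identity for loss differences: for real numbers u, a, b, ℓ_α(u − a − b) − ℓ_α(u − a) = 2 ∫_a^{a+b} (1{u ≤ t} − 1{u ≤ 0}) dt − 2(α − 1{u ≤ 0}) b. Equivalently, ℓ_α(u − a − b) − ℓ_α(u − a) − 2(1{u ≤ 0} − α) b = 2 ∫_a^{a+b} (1{u ≤ t} − 1{u ≤ 0}) dt. -/

import Mathlib

open intervalIntegral MeasureTheory

lemma step_integrable (u p q : ℝ) :
    IntervalIntegrable (fun t => if u ≤ t then (1:ℝ) else 0) volume p q := by
  have hm : Measurable (fun t : ℝ => if u ≤ t then (1:ℝ) else 0) := by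
    apply Measurable.ite _ measurable_const measurable_const
    exact measurableSet_Ici
  constructor <;>
  · apply MeasureTheory.Integrable.mono' (g := fun _ => (1:ℝ))
      (MeasureTheory.integrableOn_const (C := (1:ℝ)) measure_Ioc_lt_top.ne)
      hm.aestronglyMeasurable
    filter_upwards with t
    split <;> simp

lemma step_int_le (u a c : ℝ) (hac : a ≤ c) :
    ∫ t in a..c, (if u ≤ t then (1:ℝ) else 0) = max c u - max a u := by
  rcases le_total u a with hua | hau
  · rw [intervalIntegral.integral_congr (g := fun _ => (1:ℝ))]
    · simp [max_eq_left (hua.trans hac), max_eq_left hua]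
    · intro t ht
      rw [Set.uIcc_of_le hac] at ht
      exact if_pos (hua.trans ht.1)
  · rcases le_total c u with hcu | huc
    · have h0 : ∫ t in a..c, (if u ≤ t then (1:ℝ) else 0) = ∫ _ in a..c, (0:ℝ) := by
        apply intervalIntegral.integral_congr_ae
        filter_upwards [MeasureTheory.compl_mem_ae_iff.2 (Real.volume_singleton : MeasureTheory.volume {u} = 0)]
          with t ht hmem
        rw [Set.uIoc_of_le hac] at hmem
        have : t < u := lt_of_le_of_ne (hmem.2.trans hcu) ht
        exact if_neg (not_le.2 this)
      rw [h0]
      simp [max_eq_right hcu, max_eq_right (hac.trans hcu)]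
    · have h1 : ∫ t in a..u, (if u ≤ t then (1:ℝ) else 0) = 0 := by
        rw [intervalIntegral.integral_congr_ae (g := fun _ => (0:ℝ))]
        · simp
        · filter_upwards [MeasureTheory.compl_mem_ae_iff.2 (Real.volume_singleton : MeasureTheory.volume {u} = 0)]
            with t ht hmem
          rw [Set.uIoc_of_le hau] at hmem
          exact if_neg (not_le.2 (lt_of_le_of_ne hmem.2 ht))
      have h2 : ∫ t in u..c, (if u ≤ t then (1:ℝ) else 0) = c - u := by
        rw [intervalIntegral.integral_congr (g := fun _ => (1:ℝ))]
        · simp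
        · intro t ht
          rw [Set.uIcc_of_le huc] at ht
          exact if_pos ht.1
      rw [← intervalIntegral.integral_add_adjacent_intervals
          (step_integrable u a u) (step_integrable u u c), h1, h2]
      rw [max_eq_left huc, max_eq_right hau]
      ring

lemma step_int (u a c : ℝ) :
    ∫ t in a..c, (if u ≤ t then (1:ℝ) else 0) = max c u - max a u := by
  rcases le_total a c with h | h
  · exact step_int_le u a c h
  · rw [intervalIntegral.integral_symm, step_int_le u c a h]
    ring

/-- Knight-type identity for check-loss differences: for real `u, a, b`,
`ℓ_α(u − a − b) − ℓ_α(u − a) = 2 ∫_a^{a+b} (1{u ≤ t} − 1{u ≤ 0}) dt − 2(α − 1{u ≤ 0}) b`,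
where `ℓ_α(q) = |q| + (2α−1)q`. -/
theorem knight_identity (α : ℝ) (hα : α ∈ Set.Ioo (0:ℝ) 1) (u a b : ℝ) :
    (|u - a - b| + (2 * α - 1) * (u - a - b)) - (|u - a| + (2 * α - 1) * (u - a))
      = 2 * (∫ t in a..(a + b),
            ((if u ≤ t then (1:ℝ) else 0) - (if u ≤ 0 then (1:ℝ) else 0)))
        - 2 * (α - (if u ≤ 0 then (1:ℝ) else 0)) * b := by
  have hint : (∫ t in a..(a + b),
      ((if u ≤ t then (1:ℝ) else 0) - (if u ≤ 0 then (1:ℝ) else 0)))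
      = (max (a + b) u - max a u) - (if u ≤ 0 then (1:ℝ) else 0) * b := by
    rw [intervalIntegral.integral_sub (step_integrable u a (a + b))
        intervalIntegrable_const, step_int, intervalIntegral.integral_const]
    simp only [smul_eq_mul]
    ring
  rw [hint]
  have hrw : u - a - b = u - (a + b) := by ring
  have hkey : |u - (a + b)| - |u - a| + b = 2 * (max (a + b) u - max a u) := by
    rcases le_total u (a + b) with h1 | h1 <;> rcases le_total u a with h2 | h2
    · rw [abs_of_nonpos (by linarith), abs_of_nonpos (by linarith),
        max_eq_left h1, max_eq_left h2]; ring
    · rw [abs_of_nonpos (by linarith), abs_of_nonneg (by linarith),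
        max_eq_left h1, max_eq_right h2]; ring
    · rw [abs_of_nonneg (by linarith), abs_of_nonpos (by linarith),
        max_eq_right h1, max_eq_left h2]; ring
    · rw [abs_of_nonneg (by linarith), abs_of_nonneg (by linarith),
        max_eq_right h1, max_eq_right h2]; ring
  rw [hrw]
  linear_combination hkey
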